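/- Let T > 0, let α be a probability measure on the interval [−T, 0], and let g, Z : ℝ → ℝ be measurable functions with g(v) = Z(v) = 0 for v < 0 such that the product g·Z is integrable on [0, T]. Then for every t ∈ [0, T]: ∫ₜᵀ (∫_{[−T,0]} g(s+u) Z(s+u) α(du)) ds = ∫₀ᵀ α((v−T, (v−t) ∧ 0]) g(v) Z(v) dv, where α((a, b]) denotes the α-measure of the half-open interval (a, b] (interpreted as 0 when b ≤ a) and ∧ denotes minimum. -/

import Mathlib

open MeasureTheory
open scoped ENNReal

/-- Fubini/change-of-variables identity for the linear time delayed
generator: for `g, Z` measurable, vanishing on negatives, with `g·Z` integrable on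
`[0,T]`, and every `t ∈ [0,T]`,
`∫ₜᵀ (∫_{[-T,0]} g(s+u) Z(s+u) α(du)) ds = ∫₀ᵀ α((v−T, (v−t) ∧ 0]) g(v) Z(v) dv`. -/
theorem linear_generator_fubini
    (T : ℝ) (hT : 0 < T)
    (α : Measure ℝ) [IsProbabilityMeasure α] (hα : α (Set.Icc (-T) 0) = 1)
    (g Z : ℝ → ℝ) (hg : Measurable g) (hZ : Measurable Z)
    (hg0 : ∀ v < 0, g v = 0) (hZ0 : ∀ v < 0, Z v = 0)
    (hgZ : IntegrableOn (fun v => g v * Z v) (Set.Icc 0 T)) :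
    ∀ t ∈ Set.Icc (0 : ℝ) T,
      ∫ s in t..T, (∫ u, g (s + u) * Z (s + u) ∂α)
        = ∫ v in (0 : ℝ)..T, (α (Set.Ioc (v - T) (min (v - t) 0))).toReal * (g v * Z v) := by
  intro t ht
  obtain ⟨ht0, htT⟩ := ht
  set h : ℝ → ℝ := fun v => g v * Z v with hh
  have hmh : Measurable h := hg.mul hZ
  have hh0 : ∀ v < 0, h v = 0 := fun v hv => by simp [hh, hg0 v hv]
  -- h is integrable on Iic T
  have hIic : IntegrableOn h (Set.Iic T) := by
    have hsub : Set.Iic T ⊆ Set.Iio 0 ∪ Set.Icc 0 T := by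
      intro x hx
      rcases lt_or_ge x 0 with hx0 | hx0
      · exact Or.inl hx0
      · exact Or.inr ⟨hx0, hx⟩
    refine IntegrableOn.mono_set (IntegrableOn.union ?_ hgZ) hsub
    have hEq : Set.EqOn h 0 (Set.Iio 0) := fun v hv => hh0 v hv
    exact (integrableOn_congr_fun hEq measurableSet_Iio).mpr (integrableOn_zero)
  -- a.e. u in [-T,0]
  have hae : ∀ᵐ u ∂α, u ∈ Set.Icc (-T) 0 := by
    have : α (Set.Icc (-T) 0)ᶜ = 0 := by
      rw [measure_compl measurableSet_Icc (measure_ne_top _ _), hα, measure_univ, tsub_self]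
    filter_upwards [measure_eq_zero_iff_ae_notMem.mp this] with u hu
    simpa using hu
  -- lintegral translation
  have ltrans : ∀ (u : ℝ) (k : ℝ → ℝ≥0∞) (a b : ℝ),
      ∫⁻ s in Set.Ioc a b, k (s + u) = ∫⁻ v in Set.Ioc (a+u) (b+u), k v := by
    intro u k a b
    have hmp := measurePreserving_add_right (volume : Measure ℝ) u
    have hemb := (MeasurableEquiv.addRight u).measurableEmbedding
    have := hmp.setLIntegral_comp_preimage_emb hemb k (Set.Ioc (a+u) (b+u))
    simpa only [Set.preimage_add_const_Ioc, add_sub_cancel_right] using this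
  have hC : ∫⁻ v in Set.Iic T, ‖h v‖₊ ∂volume < ⊤ := hIic.2
  -- Fubini integrability for LHS
  have hF1meas : Measurable (fun p : ℝ × ℝ => h (p.1 + p.2)) :=
    hmh.comp (measurable_fst.add measurable_snd)
  have hF1 : Integrable (fun p : ℝ × ℝ => h (p.1 + p.2))
      (((volume : Measure ℝ).restrict (Set.Ioc t T)).prod α) := by
    refine ⟨hF1meas.aestronglyMeasurable, ?_⟩
    have key : ∫⁻ p, ‖h (p.1 + p.2)‖₊
        ∂(((volume : Measure ℝ).restrict (Set.Ioc t T)).prod α)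
        = ∫⁻ u, ∫⁻ s in Set.Ioc t T, ‖h (s + u)‖₊ ∂volume ∂α :=
      lintegral_prod_symm' _ hF1meas.nnnorm.coe_nnreal_ennreal
    rw [HasFiniteIntegral]; simp only [enorm_eq_nnnorm]; rw [key]
    calc ∫⁻ u, ∫⁻ s in Set.Ioc t T, ‖h (s + u)‖₊ ∂volume ∂α
        ≤ ∫⁻ _, (∫⁻ v in Set.Iic T, ‖h v‖₊ ∂volume) ∂α := by
          refine lintegral_mono_ae (hae.mono fun u hu => ?_)
          obtain ⟨huT, hu0⟩ := hu
          rw [ltrans u (fun v => ‖h v‖₊) t T]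
          exact lintegral_mono_set (fun x hx => le_trans hx.2 (by linarith))
      _ = ∫⁻ v in Set.Iic T, ‖h v‖₊ ∂volume := by
          rw [lintegral_const, measure_univ, mul_one]
      _ < ⊤ := hC
  -- LHS = middle
  have lhsM : ∫ s in t..T, (∫ u, h (s + u) ∂α)
      = ∫ u, (∫ v in (t+u)..(T+u), h v) ∂α := by
    rw [intervalIntegral.integral_of_le htT]
    rw [integral_integral_swap (f := fun s u => h (s + u)) hF1]
    refine integral_congr_ae (Filter.Eventually.of_forall fun u => ?_)
    show ∫ s in Set.Ioc t T, h (s + u) ∂volume = ∫ v in (t+u)..(T+u), h v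
    rw [← intervalIntegral.integral_of_le htT, intervalIntegral.integral_comp_add_right]
  -- the indicator set
  set S : Set (ℝ × ℝ) := {p : ℝ × ℝ | p.1 - T < p.2 ∧ p.2 ≤ p.1 - t ∧ p.2 ≤ 0} with hS
  have hSmeas : MeasurableSet S := by
    have hSeq : S = {p : ℝ × ℝ | p.1 - T < p.2}
        ∩ ({p : ℝ × ℝ | p.2 ≤ p.1 - t} ∩ {p : ℝ × ℝ | p.2 ≤ 0}) := by
      ext p; simp [hS, and_assoc]
    rw [hSeq]
    exact (measurableSet_lt (measurable_fst.sub measurable_const) measurable_snd).inter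
      ((measurableSet_le measurable_snd (measurable_fst.sub measurable_const)).inter
        (measurableSet_le measurable_snd measurable_const))
  have hind : ∀ p : ℝ × ℝ,
      (Set.Ioc (p.1 - T) (min (p.1 - t) 0)).indicator (1 : ℝ → ℝ) p.2
        = S.indicator (1 : ℝ × ℝ → ℝ) p := by
    intro p
    simp only [Set.indicator_apply, Set.mem_Ioc, le_min_iff, hS, Set.mem_setOf_eq, and_assoc, Pi.one_apply]
  -- Fubini integrability for RHS
  have hGint : Integrable (fun p : ℝ × ℝ => h p.1)
      (((volume : Measure ℝ).restrict (Set.Ioc 0 T)).prod α) := by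
    refine ⟨(hmh.comp measurable_fst).aestronglyMeasurable, ?_⟩
    have key : ∫⁻ p, ‖h p.1‖₊ ∂(((volume : Measure ℝ).restrict (Set.Ioc 0 T)).prod α)
        = ∫⁻ v in Set.Ioc 0 T, ∫⁻ _, (‖h v‖₊ : ℝ≥0∞) ∂α ∂volume :=
      lintegral_prod _ ((hmh.comp measurable_fst).nnnorm.coe_nnreal_ennreal.aemeasurable)
    rw [HasFiniteIntegral]; simp only [enorm_eq_nnnorm]; rw [key]
    simp only [lintegral_const, measure_univ, mul_one]
    exact (hIic.mono_set (fun x hx => hx.2)).2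
  -- Fubini integrability for RHS integrand
  have hF2 : Integrable (Function.uncurry fun v u =>
      (Set.Ioc (v - T) (min (v - t) 0)).indicator (1 : ℝ → ℝ) u * (g v * Z v))
      (((volume : Measure ℝ).restrict (Set.Ioc 0 T)).prod α) := by
    have hmeq : (Function.uncurry fun v u =>
        (Set.Ioc (v - T) (min (v - t) 0)).indicator (1 : ℝ → ℝ) u * (g v * Z v))
        = fun p : ℝ × ℝ => S.indicator (1 : ℝ × ℝ → ℝ) p * h p.1 := by
      funext p
      show (Set.Ioc (p.1 - T) (min (p.1 - t) 0)).indicator (1 : ℝ → ℝ) p.2 * (g p.1 * Z p.1)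
        = S.indicator (1 : ℝ × ℝ → ℝ) p * h p.1
      rw [hind p]
    rw [hmeq]
    refine Integrable.mono' hGint.norm
      (((measurable_one.indicator hSmeas).mul (hmh.comp measurable_fst)).aestronglyMeasurable)
      (Filter.Eventually.of_forall fun p => ?_)
    by_cases hp : p ∈ S
    · rw [Set.indicator_of_mem hp]; simp
    · rw [Set.indicator_of_notMem hp]; simp [norm_nonneg]
  -- RHS = middle
  have rhsM : (∫ v in (0:ℝ)..T, (α (Set.Ioc (v - T) (min (v - t) 0))).toReal * (g v * Z v))
      = ∫ u, (∫ v in (t+u)..(T+u), h v) ∂α := by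
    have step1 : ∀ v : ℝ, (α (Set.Ioc (v - T) (min (v - t) 0))).toReal * (g v * Z v)
        = ∫ u, (Set.Ioc (v - T) (min (v - t) 0)).indicator (1 : ℝ → ℝ) u * (g v * Z v) ∂α := by
      intro v
      rw [integral_mul_const, integral_indicator_one measurableSet_Ioc, Measure.real]
    calc (∫ v in (0:ℝ)..T, (α (Set.Ioc (v - T) (min (v - t) 0))).toReal * (g v * Z v))
        = ∫ v in Set.Ioc (0:ℝ) T,
            (α (Set.Ioc (v - T) (min (v - t) 0))).toReal * (g v * Z v) ∂volume :=
          intervalIntegral.integral_of_le hT.le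
      _ = ∫ v in Set.Ioc (0:ℝ) T, (∫ u,
            (Set.Ioc (v - T) (min (v - t) 0)).indicator (1 : ℝ → ℝ) u * (g v * Z v) ∂α) ∂volume :=
          integral_congr_ae (Filter.Eventually.of_forall fun v => step1 v)
      _ = ∫ u, (∫ v in Set.Ioc (0:ℝ) T,
            (Set.Ioc (v - T) (min (v - t) 0)).indicator (1 : ℝ → ℝ) u * (g v * Z v) ∂volume) ∂α :=
          integral_integral_swap (f := fun v u =>
            (Set.Ioc (v - T) (min (v - t) 0)).indicator (1 : ℝ → ℝ) u * (g v * Z v)) hF2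
      _ = ∫ u, (∫ v in (t+u)..(T+u), h v) ∂α := by
          refine integral_congr_ae (hae.mono fun u hu => ?_)
          obtain ⟨huT, hu0⟩ := hu
          show (∫ v in Set.Ioc (0:ℝ) T,
              (Set.Ioc (v - T) (min (v - t) 0)).indicator (1 : ℝ → ℝ) u * (g v * Z v) ∂volume)
            = ∫ v in (t+u)..(T+u), h v
          rw [intervalIntegral.integral_of_le (by linarith : t + u ≤ T + u),
            ← integral_indicator measurableSet_Ioc, ← integral_indicator measurableSet_Ioc]
          refine integral_congr_ae ?_
          have hns : (volume : Measure ℝ) ({0, t + u, T + u} : Set ℝ) = 0 :=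
            (Set.toFinite _).countable.measure_zero _
          filter_upwards [measure_eq_zero_iff_ae_notMem.mp hns] with v hv
          simp only [Set.mem_insert_iff, Set.mem_singleton_iff, not_or] at hv
          obtain ⟨hv0, hvt, hvT⟩ := hv
          by_cases h1 : v ∈ Set.Ioc (0:ℝ) T
          · rw [Set.indicator_of_mem h1]
            by_cases h2 : u ∈ Set.Ioc (v - T) (min (v - t) 0)
            · have h2a : v - T < u := h2.1
              have h2b : u ≤ v - t := le_trans h2.2 (min_le_left _ _)
              have hv3 : v ∈ Set.Ioc (t+u) (T+u) :=
                ⟨lt_of_le_of_ne (by linarith) (Ne.symm hvt), by linarith⟩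
              rw [Set.indicator_of_mem h2, Set.indicator_of_mem hv3]
              simp [hh]
            · have hv3 : v ∉ Set.Ioc (t+u) (T+u) := by
                intro hmem
                have hlt : v < T + u := lt_of_le_of_ne hmem.2 hvT
                exact h2 ⟨by linarith, le_min (by linarith [hmem.1]) hu0⟩
              rw [Set.indicator_of_notMem h2, Set.indicator_of_notMem hv3, zero_mul]
          · rw [Set.indicator_of_notMem h1]
            by_cases h3 : v ∈ Set.Ioc (t+u) (T+u)
            · rw [Set.indicator_of_mem h3]
              refine (hh0 v ?_).symm
              have hnpos : ¬ (0:ℝ) < v := fun hpos => h1 ⟨hpos, by linarith [h3.2]⟩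
              exact lt_of_le_of_ne (not_lt.mp hnpos) hv0
            · rw [Set.indicator_of_notMem h3]
  exact lhsM.trans rhsM.symm
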